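/- arXiv:2310.00350 — 2 statements merged into one kernel-verified Lean document; each statement's English description precedes it below -/
import Mathlib

section
/- Fix an integer k ≥ 1 and real numbers 0 ≤ r ≤ s. Let G = (V, E, W) be a finite weighted graph, let e₀ = (u, v) ∉ E be an additional edge with weight w₀ ≥ 0, and let G̃ = (V, E ∪ {e₀}, W̃) where W̃ agrees with W on E and W̃(e₀) = w₀. Then the persistent Betti numbers of the k-cluster filtrations of G and G̃ satisfy |β₀^{r,s}(G̃^(k)) − β₀^{r,s}(G^(k))| ≤ 1; that is, adding a single weighted edge changes the number of clusters born by time r and surviving past time s by at most one. -/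
open ENNReal

variable {V : Type*}

/-- The sublevel graph `G*_t`: edges of `G` with weight at most `t`. -/
def sublevel (G : SimpleGraph V) (W : Sym2 V → NNReal) (t : ℝ≥0∞) : SimpleGraph V where
  Adj u v := G.Adj u v ∧ (W s(u, v) : ℝ≥0∞) ≤ t
  symm := by
    constructor
    intro u v h
    exact ⟨h.1.symm, by rw [Sym2.eq_swap]; exact h.2⟩
  loopless := ⟨fun v h => G.irrefl h.1⟩

/-- `N_t(v)`: the number of vertices in the connected component of `v` in `G*_t`. -/
noncomputable def clusterSize (G : SimpleGraph V) (W : Sym2 V → NNReal) (t : ℝ≥0∞) (v : V) : ℕ :=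
  Set.ncard {u | (sublevel G W t).Reachable v u}

/-- `τ_k(v) = inf {t : N_t(v) ≥ k}`, the `k`-cluster filtration value of a vertex. -/
noncomputable def tauV (G : SimpleGraph V) (W : Sym2 V → NNReal) (k : ℕ) (v : V) : ℝ≥0∞ :=
  sInf {t : ℝ≥0∞ | k ≤ clusterSize G W t v}

/-- `τ_k(e) = max (τ_k(u), τ_k(v), W(e))`, the `k`-cluster filtration value of an edge. -/
noncomputable def tauEdge (G : SimpleGraph V) (W : Sym2 V → NNReal) (k : ℕ) : Sym2 V → ℝ≥0∞ :=
  Sym2.lift ⟨fun u v => max (max (tauV G W k u) (tauV G W k v)) (W s(u, v)),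
    by intro u v; simp only []; rw [max_comm (tauV G W k u), Sym2.eq_swap]⟩

/-- The `k`-cluster sublevel graph `G^(k)_t`: its vertices are those `v` with
`τ_k(v) ≤ t` and its edges are those `e` with `τ_k(e) ≤ t`. -/
def kClusterGraph (G : SimpleGraph V) (W : Sym2 V → NNReal) (k : ℕ) (t : ℝ≥0∞) :
    SimpleGraph {v : V // tauV G W k v ≤ t} where
  Adj u v := G.Adj u.1 v.1 ∧ tauEdge G W k s(u.1, v.1) ≤ t
  symm := by
    constructor
    intro u v h
    exact ⟨h.1.symm, by rw [Sym2.eq_swap]; exact h.2⟩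
  loopless := ⟨fun v h => G.irrefl h.1⟩

/-- The 0-th persistent Betti number `β₀^{r,s}(G^(k))`: the number of connected
components of `G^(k)_s` containing at least one vertex `v` with `τ_k(v) ≤ r`. -/
noncomputable def persistentBetti (G : SimpleGraph V) (W : Sym2 V → NNReal) (k : ℕ)
    (r s : ℝ≥0∞) : ℕ :=
  Set.ncard {c : (kClusterGraph G W k s).ConnectedComponent |
    ∃ v : {v : V // tauV G W k v ≤ s},
      (kClusterGraph G W k s).connectedComponentMk v = c ∧ tauV G W k v.1 ≤ r}

set_option linter.unusedSectionVars false

section AuxBasic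

variable [Fintype V] [DecidableEq V]

lemma sublevel_mono {G : SimpleGraph V} {W : Sym2 V → NNReal} {t₁ t₂ : ℝ≥0∞} (h : t₁ ≤ t₂) :
    sublevel G W t₁ ≤ sublevel G W t₂ := fun _ _ hab => ⟨hab.1, hab.2.trans h⟩

lemma clusterSize_le_of_le {G₁ G₂ : SimpleGraph V} {W₁ W₂ : Sym2 V → NNReal} {t₁ t₂ : ℝ≥0∞}
    (h : sublevel G₁ W₁ t₁ ≤ sublevel G₂ W₂ t₂) (x : V) :
    clusterSize G₁ W₁ t₁ x ≤ clusterSize G₂ W₂ t₂ x :=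
  Set.ncard_le_ncard (fun _ hy => hy.mono h) (Set.toFinite _)

lemma clusterSize_eq_of_reachable {G : SimpleGraph V} {W : Sym2 V → NNReal} {t : ℝ≥0∞} {x y : V}
    (h : (sublevel G W t).Reachable x y) : clusterSize G W t x = clusterSize G W t y := by
  unfold clusterSize
  congr 1
  ext z
  exact ⟨fun hz => h.symm.trans hz, fun hz => h.trans hz⟩

lemma tauV_le_of_k_le {G : SimpleGraph V} {W : Sym2 V → NNReal} {k : ℕ} {t : ℝ≥0∞} {x : V}
    (h : k ≤ clusterSize G W t x) : tauV G W k x ≤ t := sInf_le h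

lemma k_le_of_tauV_le {G : SimpleGraph V} {W : Sym2 V → NNReal} {k : ℕ} {t : ℝ≥0∞} {x : V}
    (ht : t ≠ ⊤) (h : tauV G W k x ≤ t) : k ≤ clusterSize G W t x := by
  set A : Set ℝ≥0∞ := {c | (∃ e : Sym2 V, ((W e : ℝ≥0∞)) = c) ∧ t < c} with hA
  have hfin : A.Finite := by
    apply (Set.finite_range (fun e : Sym2 V => ((W e : ℝ≥0∞)))).subset
    rintro c ⟨⟨e, he⟩, -⟩
    exact ⟨e, he⟩
  have htm : t < sInf A := by
    rcases A.eq_empty_or_nonempty with he | hne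
    · rw [he, sInf_empty]; exact ht.lt_top
    · exact (hne.csInf_mem hfin).2
  have hlt : tauV G W k x < sInf A := lt_of_le_of_lt h htm
  obtain ⟨t', ht', htm'⟩ := sInf_lt_iff.mp hlt
  have hsub : sublevel G W t' ≤ sublevel G W t := by
    intro a b hab
    refine ⟨hab.1, ?_⟩
    by_contra hw
    push_neg at hw
    have : sInf A ≤ (W s(a, b) : ℝ≥0∞) := sInf_le ⟨⟨s(a, b), rfl⟩, hw⟩
    exact absurd (this.trans hab.2) (not_le.mpr htm')
  exact le_trans ht' (clusterSize_le_of_le hsub x)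

lemma tauV_le_iff {G : SimpleGraph V} {W : Sym2 V → NNReal} {k : ℕ} {t : ℝ≥0∞} {x : V}
    (ht : t ≠ ⊤) : tauV G W k x ≤ t ↔ k ≤ clusterSize G W t x :=
  ⟨k_le_of_tauV_le ht, tauV_le_of_k_le⟩

end AuxBasic


section AuxAdd

variable [Fintype V] [DecidableEq V]
variable {G : SimpleGraph V} {W : Sym2 V → NNReal} {u v : V} {w₀ : NNReal} {k : ℕ}

lemma W'_eq (hnotE : ¬ G.Adj u v) {a b : V} (hab : G.Adj a b) :
    Function.update W s(u, v) w₀ s(a, b) = W s(a, b) := by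
  apply Function.update_of_ne
  intro hs
  rcases Sym2.eq_iff.mp hs with ⟨rfl, rfl⟩ | ⟨rfl, rfl⟩
  exacts [hnotE hab, hnotE hab.symm]

lemma sublevel_add_adj (huv : u ≠ v) (hnotE : ¬ G.Adj u v) {t : ℝ≥0∞} {a b : V} :
    (sublevel (G ⊔ SimpleGraph.fromEdgeSet {s(u, v)}) (Function.update W s(u, v) w₀) t).Adj a b ↔
      (sublevel G W t).Adj a b ∨ (s(a, b) = s(u, v) ∧ (w₀ : ℝ≥0∞) ≤ t) := by
  constructor
  · rintro ⟨hadj, hW⟩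
    rcases (SimpleGraph.sup_adj _ _ _ _).mp hadj with hG | hE
    · left
      exact ⟨hG, by rwa [W'_eq hnotE hG] at hW⟩
    · right
      have hs : s(a, b) = s(u, v) := by
        simpa using ((SimpleGraph.fromEdgeSet_adj _).mp hE).1
      refine ⟨hs, ?_⟩
      rwa [hs, Function.update_self] at hW
  · rintro (⟨hG, hW⟩ | ⟨hs, hw⟩)
    · exact ⟨(SimpleGraph.sup_adj _ _ _ _).mpr (Or.inl hG), by rwa [W'_eq hnotE hG]⟩
    · have hne : a ≠ b := by
        rcases Sym2.eq_iff.mp hs with ⟨rfl, rfl⟩ | ⟨rfl, rfl⟩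
        exacts [huv, huv.symm]
      refine ⟨(SimpleGraph.sup_adj _ _ _ _).mpr (Or.inr ?_), ?_⟩
      · exact (SimpleGraph.fromEdgeSet_adj _).mpr ⟨by simp [hs], hne⟩
      · rwa [hs, Function.update_self]

lemma sublevel_le_sublevel_add (huv : u ≠ v) (hnotE : ¬ G.Adj u v) {t : ℝ≥0∞} :
    sublevel G W t ≤
      sublevel (G ⊔ SimpleGraph.fromEdgeSet {s(u, v)}) (Function.update W s(u, v) w₀) t :=
  fun _ _ hab => (sublevel_add_adj huv hnotE).mpr (Or.inl hab)

lemma tauV_add_le (huv : u ≠ v) (hnotE : ¬ G.Adj u v) (x : V) :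
    tauV (G ⊔ SimpleGraph.fromEdgeSet {s(u, v)}) (Function.update W s(u, v) w₀) k x ≤
      tauV G W k x := by
  apply sInf_le_sInf
  intro t ht
  exact le_trans ht (clusterSize_le_of_le (sublevel_le_sublevel_add huv hnotE) x)

lemma reachable_avoid {A B : SimpleGraph V} (hAB : A ≤ B)
    (hd : ∀ a b, B.Adj a b → A.Adj a b ∨ s(a, b) = s(u, v)) :
    ∀ {x y : V}, B.Walk x y → ¬ B.Reachable x u → ¬ B.Reachable x v → A.Reachable x y := by
  intro x y w
  induction w with
  | nil => exact fun _ _ => SimpleGraph.Reachable.refl _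
  | @cons a c b h p ih =>
    intro hxu hxv
    have hcu : ¬ B.Reachable c u := fun hr => hxu (h.reachable.trans hr)
    have hcv : ¬ B.Reachable c v := fun hr => hxv (h.reachable.trans hr)
    rcases hd _ _ h with hA | hs
    · exact hA.reachable.trans (ih hcu hcv)
    · rcases Sym2.eq_iff.mp hs with ⟨rfl, rfl⟩ | ⟨rfl, rfl⟩
      · exact absurd (SimpleGraph.Reachable.refl _) hxu
      · exact absurd (SimpleGraph.Reachable.refl _) hxv

/-- L3: a vertex whose `k`-cluster value drops after adding the edge is connected to
both `u` and `v` in the sublevel graph, and the new edge is present. -/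
lemma connect_of_new (huv : u ≠ v) (hnotE : ¬ G.Adj u v) {t : ℝ≥0∞} {x : V}
    (ht : t ≠ ⊤)
    (hx' : tauV (G ⊔ SimpleGraph.fromEdgeSet {s(u, v)}) (Function.update W s(u, v) w₀) k x ≤ t)
    (hx : ¬ tauV G W k x ≤ t) :
    (w₀ : ℝ≥0∞) ≤ t ∧
    (sublevel (G ⊔ SimpleGraph.fromEdgeSet {s(u, v)}) (Function.update W s(u, v) w₀) t).Reachable x u ∧
    (sublevel (G ⊔ SimpleGraph.fromEdgeSet {s(u, v)}) (Function.update W s(u, v) w₀) t).Reachable x v ∧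
    tauV (G ⊔ SimpleGraph.fromEdgeSet {s(u, v)}) (Function.update W s(u, v) w₀) k u ≤ t ∧
    tauV (G ⊔ SimpleGraph.fromEdgeSet {s(u, v)}) (Function.update W s(u, v) w₀) k v ≤ t := by
  set G' := G ⊔ SimpleGraph.fromEdgeSet {s(u, v)} with hG'
  set W' := Function.update W s(u, v) w₀ with hW'
  have hk' : k ≤ clusterSize G' W' t x := k_le_of_tauV_le ht hx'
  have hkx : ¬ k ≤ clusterSize G W t x := fun h => hx (tauV_le_of_k_le h)
  have hw : (w₀ : ℝ≥0∞) ≤ t := by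
    by_contra hw
    apply hkx
    have heq : sublevel G' W' t = sublevel G W t := by
      ext a b
      rw [sublevel_add_adj huv hnotE]
      exact ⟨fun h => h.resolve_right (fun h' => hw h'.2), Or.inl⟩
    calc k ≤ clusterSize G' W' t x := hk'
    _ ≤ clusterSize G W t x := clusterSize_le_of_le (le_of_eq heq) x
  have hadj : (sublevel G' W' t).Adj u v :=
    (sublevel_add_adj huv hnotE).mpr (Or.inr ⟨rfl, hw⟩)
  have hor : (sublevel G' W' t).Reachable x u ∨ (sublevel G' W' t).Reachable x v := by
    by_contra hcon
    push_neg at hcon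
    apply hkx
    calc k ≤ clusterSize G' W' t x := hk'
    _ ≤ clusterSize G W t x := by
        apply Set.ncard_le_ncard _ (Set.toFinite _)
        intro z hz
        obtain ⟨w⟩ := hz
        exact reachable_avoid (sublevel_le_sublevel_add huv hnotE)
          (fun a b hab => ((sublevel_add_adj huv hnotE).mp hab).imp id (fun h => h.1))
          w hcon.1 hcon.2
  have hxu : (sublevel G' W' t).Reachable x u ∧ (sublevel G' W' t).Reachable x v := by
    rcases hor with h | h
    · exact ⟨h, h.trans hadj.reachable⟩
    · exact ⟨h.trans hadj.symm.reachable, h⟩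
  refine ⟨hw, hxu.1, hxu.2, ?_, ?_⟩
  · exact tauV_le_of_k_le (le_trans hk' (le_of_eq (clusterSize_eq_of_reachable hxu.1)))
  · exact tauV_le_of_k_le (le_trans hk' (le_of_eq (clusterSize_eq_of_reachable hxu.2)))

lemma tauEdge_mk {G : SimpleGraph V} {W : Sym2 V → NNReal} {k : ℕ} (a b : V) :
    tauEdge G W k s(a, b) = max (max (tauV G W k a) (tauV G W k b)) ((W s(a, b) : ℝ≥0∞)) := by
  rfl

/-- L4: sublevel reachability at time `t ≤ s` within a `k`-large cluster gives
reachability in the `k`-cluster graph at time `s`. -/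
lemma kCluster_reachable_of_sublevel {G : SimpleGraph V} {W : Sym2 V → NNReal} {k : ℕ}
    {t s' : ℝ≥0∞} (hts : t ≤ s') {x y : V}
    (hk : k ≤ clusterSize G W t x) (hr : (sublevel G W t).Reachable x y)
    (hx : tauV G W k x ≤ s') (hy : tauV G W k y ≤ s') :
    (kClusterGraph G W k s').Reachable ⟨x, hx⟩ ⟨y, hy⟩ := by
  have main : ∀ {a b : V} (w : (sublevel G W t).Walk a b), k ≤ clusterSize G W t a →
      ∀ (pa : tauV G W k a ≤ s') (pb : tauV G W k b ≤ s'),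
      (kClusterGraph G W k s').Reachable ⟨a, pa⟩ ⟨b, pb⟩ := by
    intro a b w
    induction w with
    | nil => exact fun _ pa pb => SimpleGraph.Reachable.refl _
    | @cons a c b h p ih =>
      intro hka pa pb
      have hkc : k ≤ clusterSize G W t c := (clusterSize_eq_of_reachable h.reachable) ▸ hka
      have pc : tauV G W k c ≤ s' := (tauV_le_of_k_le hkc).trans hts
      have hadj : (kClusterGraph G W k s').Adj ⟨a, pa⟩ ⟨c, pc⟩ := by
        refine ⟨h.1, ?_⟩
        rw [tauEdge_mk]
        exact max_le (max_le pa pc) (h.2.trans hts)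
      exact hadj.reachable.trans (ih hkc pc pb)
  obtain ⟨w⟩ := hr
  exact main w hk hx hy

end AuxAdd


section AuxStruct

variable [Fintype V] [DecidableEq V]
variable {G : SimpleGraph V} {W : Sym2 V → NNReal} {u v : V} {w₀ : NNReal} {k : ℕ} {s' : ℝ≥0∞}

lemma old_old_adj (hnotE : ¬ G.Adj u v)
    {x y : {z : V // tauV (G ⊔ SimpleGraph.fromEdgeSet {s(u, v)})
        (Function.update W s(u, v) w₀) k z ≤ s'}}
    (ha : tauV G W k x.1 ≤ s') (hb : tauV G W k y.1 ≤ s')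
    (hab : (kClusterGraph (G ⊔ SimpleGraph.fromEdgeSet {s(u, v)})
        (Function.update W s(u, v) w₀) k s').Adj x y) :
    (kClusterGraph G W k s').Adj ⟨x.1, ha⟩ ⟨y.1, hb⟩ ∨ s(x.1, y.1) = s(u, v) := by
  rcases (SimpleGraph.sup_adj _ _ _ _).mp hab.1 with hG | hE
  · left
    refine ⟨hG, ?_⟩
    have h2 := hab.2
    rw [tauEdge_mk] at h2
    have hWle : ((W s(x.1, y.1) : ℝ≥0∞)) ≤ s' := by
      have h1 := le_trans (le_max_right _ _) h2
      rwa [W'_eq hnotE hG] at h1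
    rw [tauEdge_mk]
    exact max_le (max_le ha hb) hWle
  · right
    simpa using ((SimpleGraph.fromEdgeSet_adj _).mp hE).1

lemma old_new_adj (hnotE : ¬ G.Adj u v) (hs' : s' ≠ ⊤)
    {x y : {z : V // tauV (G ⊔ SimpleGraph.fromEdgeSet {s(u, v)})
        (Function.update W s(u, v) w₀) k z ≤ s'}}
    (ha : tauV G W k x.1 ≤ s') (hx : ¬ tauV G W k y.1 ≤ s')
    (hab : (kClusterGraph (G ⊔ SimpleGraph.fromEdgeSet {s(u, v)})
        (Function.update W s(u, v) w₀) k s').Adj x y) :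
    s(x.1, y.1) = s(u, v) := by
  rcases (SimpleGraph.sup_adj _ _ _ _).mp hab.1 with hG | hE
  · exfalso
    have h2 := hab.2
    rw [tauEdge_mk] at h2
    have hWle : ((W s(x.1, y.1) : ℝ≥0∞)) ≤ s' := by
      have h1 := le_trans (le_max_right _ _) h2
      rwa [W'_eq hnotE hG] at h1
    have hadjS : (sublevel G W s').Adj x.1 y.1 := ⟨hG, hWle⟩
    apply hx
    apply tauV_le_of_k_le
    calc k ≤ clusterSize G W s' x.1 := k_le_of_tauV_le hs' ha
    _ = clusterSize G W s' y.1 := clusterSize_eq_of_reachable hadjS.reachable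
  · simpa using ((SimpleGraph.fromEdgeSet_adj _).mp hE).1

/-- `x` is connected (in the old `k`-cluster graph at time `s'`) to `u` or to `v`. -/
def oldConn (G : SimpleGraph V) (W : Sym2 V → NNReal) (k : ℕ) (s' : ℝ≥0∞) (u v : V)
    (x : {z : V // tauV G W k z ≤ s'}) : Prop :=
  (∃ hu : tauV G W k u ≤ s', (kClusterGraph G W k s').Reachable x ⟨u, hu⟩) ∨
  (∃ hv : tauV G W k v ≤ s', (kClusterGraph G W k s').Reachable x ⟨v, hv⟩)

lemma oldConn_trans {x y : {z : V // tauV G W k z ≤ s'}}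
    (h : (kClusterGraph G W k s').Reachable x y) (hy : oldConn G W k s' u v y) :
    oldConn G W k s' u v x := by
  rcases hy with ⟨p, hr⟩ | ⟨p, hr⟩
  · exact Or.inl ⟨p, h.trans hr⟩
  · exact Or.inr ⟨p, h.trans hr⟩

lemma oldConn_of_eq_u {x : {z : V // tauV G W k z ≤ s'}} (h : x.1 = u) :
    oldConn G W k s' u v x := by
  obtain ⟨z, hz⟩ := x
  subst h
  exact Or.inl ⟨hz, SimpleGraph.Reachable.refl _⟩

lemma oldConn_of_eq_v {x : {z : V // tauV G W k z ≤ s'}} (h : x.1 = v) :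
    oldConn G W k s' u v x := by
  obtain ⟨z, hz⟩ := x
  subst h
  exact Or.inr ⟨hz, SimpleGraph.Reachable.refl _⟩

/-- L9: any walk in the new `k`-cluster graph between two vertices that are "old"
either gives old reachability, or both endpoints connect to `u` or `v` in the old graph. -/
lemma walk_structure (hnotE : ¬ G.Adj u v) (hs' : s' ≠ ⊤) :
    ∀ {x y : {z : V // tauV (G ⊔ SimpleGraph.fromEdgeSet {s(u, v)})
        (Function.update W s(u, v) w₀) k z ≤ s'}}
      (_ : (kClusterGraph (G ⊔ SimpleGraph.fromEdgeSet {s(u, v)})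
        (Function.update W s(u, v) w₀) k s').Walk x y)
      (hy : tauV G W k y.1 ≤ s'),
      (∀ hx : tauV G W k x.1 ≤ s',
        (kClusterGraph G W k s').Reachable ⟨x.1, hx⟩ ⟨y.1, hy⟩ ∨
        (oldConn G W k s' u v ⟨x.1, hx⟩ ∧ oldConn G W k s' u v ⟨y.1, hy⟩)) ∧
      (¬ tauV G W k x.1 ≤ s' → oldConn G W k s' u v ⟨y.1, hy⟩) := by
  intro x y w
  induction w with
  | nil =>
    intro hy
    exact ⟨fun _ => Or.inl (SimpleGraph.Reachable.refl _), fun hnx => absurd hy hnx⟩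
  | @cons a c b h p ih =>
    intro hy
    by_cases hc : tauV G W k c.1 ≤ s'
    · -- middle vertex old
      constructor
      · intro hx
        rcases old_old_adj hnotE hx hc h with hH | hs
        · rcases (ih hy).1 hc with hr | ⟨pc, pb⟩
          · exact Or.inl (hH.reachable.trans hr)
          · exact Or.inr ⟨oldConn_trans hH.reachable pc, pb⟩
        · -- the traversed edge is the new edge, both endpoints among {u, v}
          have pa : oldConn G W k s' u v ⟨a.1, hx⟩ := by
            rcases Sym2.eq_iff.mp hs with ⟨hau, -⟩ | ⟨hav, -⟩
            · exact oldConn_of_eq_u hau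
            · exact oldConn_of_eq_v hav
          have pc : oldConn G W k s' u v ⟨c.1, hc⟩ := by
            rcases Sym2.eq_iff.mp hs with ⟨-, hcv⟩ | ⟨-, hcu⟩
            · exact oldConn_of_eq_v hcv
            · exact oldConn_of_eq_u hcu
          rcases (ih hy).1 hc with hr | ⟨-, pb⟩
          · exact Or.inr ⟨pa, oldConn_trans hr.symm pc⟩
          · exact Or.inr ⟨pa, pb⟩
      · intro hna
        have hs := old_new_adj hnotE hs' hc hna h.symm
        have pc : oldConn G W k s' u v ⟨c.1, hc⟩ := by
          rcases Sym2.eq_iff.mp hs with ⟨hcu, -⟩ | ⟨hcv, -⟩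
          · exact oldConn_of_eq_u hcu
          · exact oldConn_of_eq_v hcv
        rcases (ih hy).1 hc with hr | ⟨-, pb⟩
        · exact oldConn_trans hr.symm pc
        · exact pb
    · -- middle vertex new
      constructor
      · intro hx
        have hs := old_new_adj hnotE hs' hx hc h
        have pa : oldConn G W k s' u v ⟨a.1, hx⟩ := by
          rcases Sym2.eq_iff.mp hs with ⟨hau, -⟩ | ⟨hav, -⟩
          · exact oldConn_of_eq_u hau
          · exact oldConn_of_eq_v hav
        exact Or.inr ⟨pa, (ih hy).2 hc⟩
      · intro _
        exact (ih hy).2 hc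

/-- Two distinct old components that merge both connect to `u` or `v`. -/
lemma merge_structure (huv : u ≠ v) (hnotE : ¬ G.Adj u v) (hs' : s' ≠ ⊤)
    {a b : {z : V // tauV G W k z ≤ s'}}
    (hab' : (kClusterGraph (G ⊔ SimpleGraph.fromEdgeSet {s(u, v)})
        (Function.update W s(u, v) w₀) k s').Reachable
        ⟨a.1, le_trans (tauV_add_le huv hnotE a.1) a.2⟩
        ⟨b.1, le_trans (tauV_add_le huv hnotE b.1) b.2⟩)
    (hnab : ¬ (kClusterGraph G W k s').Reachable a b) :
    oldConn G W k s' u v a ∧ oldConn G W k s' u v b := by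
  obtain ⟨w⟩ := hab'
  rcases (walk_structure hnotE hs' w b.2).1 a.2 with hr | hp
  · exact absurd hr hnab
  · exact hp

/-- Counting lemma: a map whose only possible collision is a single fixed pair
decreases cardinality by at most one. -/
lemma count_aux {α β : Type*} [Finite α] (f : α → β) (S : Set α) (p q : α)
    (h : ∀ c₁ ∈ S, ∀ c₂ ∈ S, f c₁ = f c₂ → c₁ ≠ c₂ →
      (c₁ = p ∧ c₂ = q) ∨ (c₁ = q ∧ c₂ = p)) :
    S.ncard ≤ (f '' S).ncard + 1 := by
  have hinj : Set.InjOn f (S \ {p}) := by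
    intro c₁ hc₁ c₂ hc₂ hf
    by_contra hne
    rcases h c₁ hc₁.1 c₂ hc₂.1 hf hne with ⟨h1, -⟩ | ⟨-, h2⟩
    · exact hc₁.2 (by simp [h1])
    · exact hc₂.2 (by simp [h2])
  calc S.ncard ≤ ((S \ {p}) ∪ {p}).ncard := by
        apply Set.ncard_le_ncard _ (Set.toFinite _)
        intro z hz
        by_cases hzp : z = p
        · exact Or.inr (by simp [hzp])
        · exact Or.inl ⟨hz, by simp [hzp]⟩
  _ ≤ (S \ {p}).ncard + ({p} : Set α).ncard := Set.ncard_union_le _ _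
  _ = (S \ {p}).ncard + 1 := by rw [Set.ncard_singleton]
  _ = (f '' (S \ {p})).ncard + 1 := by rw [Set.ncard_image_of_injOn hinj]
  _ ≤ (f '' S).ncard + 1 := by
        have := Set.ncard_le_ncard (Set.image_mono (Set.diff_subset (s := S) (t := {p})))
          ((Set.toFinite S).image f)
        omega

end AuxStruct


section AuxMain

variable [Fintype V] [DecidableEq V]
variable {G : SimpleGraph V} {W : Sym2 V → NNReal} {u v : V} {w₀ : NNReal} {k : ℕ}

/-- The natural graph homomorphism from the old to the new `k`-cluster graph. -/
def φAdd (G : SimpleGraph V) (W : Sym2 V → NNReal) (u v : V) (w₀ : NNReal) (k : ℕ)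
    (s' : ℝ≥0∞) (huv : u ≠ v) (hnotE : ¬ G.Adj u v) :
    kClusterGraph G W k s' →g
      kClusterGraph (G ⊔ SimpleGraph.fromEdgeSet {s(u, v)})
        (Function.update W s(u, v) w₀) k s' where
  toFun x := ⟨x.1, le_trans (tauV_add_le huv hnotE x.1) x.2⟩
  map_rel' := by
    intro x y h
    refine ⟨(SimpleGraph.sup_adj _ _ _ _).mpr (Or.inl h.1), ?_⟩
    have h2 := h.2
    rw [tauEdge_mk] at h2
    have hx : tauV G W k x.1 ≤ s' := ((le_max_left _ _).trans (le_max_left _ _)).trans h2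
    have hy : tauV G W k y.1 ≤ s' := ((le_max_right _ _).trans (le_max_left _ _)).trans h2
    have hW : ((W s(x.1, y.1) : ℝ≥0∞)) ≤ s' := (le_max_right _ _).trans h2
    rw [tauEdge_mk, W'_eq hnotE h.1]
    exact max_le (max_le ((tauV_add_le huv hnotE _).trans hx)
      ((tauV_add_le huv hnotE _).trans hy)) hW

lemma directionA (huv : u ≠ v) (hnotE : ¬ G.Adj u v) (r s : NNReal) (hrs : r ≤ s) :
    persistentBetti (G ⊔ SimpleGraph.fromEdgeSet {s(u, v)})
        (Function.update W s(u, v) w₀) k (r : ℝ≥0∞) (s : ℝ≥0∞) ≤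
      persistentBetti G W k (r : ℝ≥0∞) (s : ℝ≥0∞) + 1 := by
  have hrs' : (r : ℝ≥0∞) ≤ (s : ℝ≥0∞) := ENNReal.coe_le_coe.mpr hrs
  set G' := G ⊔ SimpleGraph.fromEdgeSet {s(u, v)} with hG'def
  set W' := Function.update W s(u, v) w₀ with hW'def
  set φ := φAdd G W u v w₀ k (s : ℝ≥0∞) huv hnotE with hφdef
  set f := SimpleGraph.ConnectedComponent.map φ with hfdef
  set S : Set (kClusterGraph G W k (s : ℝ≥0∞)).ConnectedComponent :=
    {c | ∃ x : {z : V // tauV G W k z ≤ (s : ℝ≥0∞)},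
      (kClusterGraph G W k (s : ℝ≥0∞)).connectedComponentMk x = c ∧
        tauV G W k x.1 ≤ (r : ℝ≥0∞)} with hSdef
  set S' : Set (kClusterGraph G' W' k (s : ℝ≥0∞)).ConnectedComponent :=
    {c | ∃ x : {z : V // tauV G' W' k z ≤ (s : ℝ≥0∞)},
      (kClusterGraph G' W' k (s : ℝ≥0∞)).connectedComponentMk x = c ∧
        tauV G' W' k x.1 ≤ (r : ℝ≥0∞)} with hS'def
  show S'.ncard ≤ S.ncard + 1
  have himg : (f '' S).ncard ≤ S.ncard := Set.ncard_image_le (Set.toFinite S)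
  by_cases hex : ∃ x : V, tauV G' W' k x ≤ (r : ℝ≥0∞) ∧ ¬ tauV G W k x ≤ (r : ℝ≥0∞)
  · obtain ⟨x₀, hx₀', hx₀⟩ := hex
    obtain ⟨-, -, -, hu', -⟩ := connect_of_new huv hnotE ENNReal.coe_ne_top hx₀' hx₀
    have hus : tauV G' W' k u ≤ (s : ℝ≥0∞) := hu'.trans hrs'
    have hsub : S' ⊆ f '' S ∪
        {(kClusterGraph G' W' k (s : ℝ≥0∞)).connectedComponentMk ⟨u, hus⟩} := by
      rintro c' ⟨y, rfl, hyr⟩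
      by_cases hyo : tauV G W k y.1 ≤ (r : ℝ≥0∞)
      · left
        refine ⟨(kClusterGraph G W k (s : ℝ≥0∞)).connectedComponentMk ⟨y.1, hyo.trans hrs'⟩,
          ⟨⟨y.1, hyo.trans hrs'⟩, rfl, hyo⟩, ?_⟩
        exact SimpleGraph.ConnectedComponent.map_mk φ _
      · right
        obtain ⟨-, hryu, -, hu2, -⟩ := connect_of_new huv hnotE ENNReal.coe_ne_top hyr hyo
        have hk2 : k ≤ clusterSize G' W' (r : ℝ≥0∞) y.1 :=
          k_le_of_tauV_le ENNReal.coe_ne_top hyr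
        have hreach := kCluster_reachable_of_sublevel hrs' hk2 hryu y.2 hus
        simp only [Set.mem_singleton_iff]
        exact SimpleGraph.ConnectedComponent.sound hreach
    calc S'.ncard ≤ (f '' S ∪
        {(kClusterGraph G' W' k (s : ℝ≥0∞)).connectedComponentMk ⟨u, hus⟩}).ncard :=
          Set.ncard_le_ncard hsub (Set.toFinite _)
    _ ≤ (f '' S).ncard + 1 := by
        have h1 := Set.ncard_union_le (f '' S)
          {(kClusterGraph G' W' k (s : ℝ≥0∞)).connectedComponentMk ⟨u, hus⟩}
        simpa [Set.ncard_singleton] using h1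
    _ ≤ S.ncard + 1 := by omega
  · push_neg at hex
    have hsub : S' ⊆ f '' S := by
      rintro c' ⟨y, rfl, hyr⟩
      have hyo : tauV G W k y.1 ≤ (r : ℝ≥0∞) := hex y.1 hyr
      refine ⟨(kClusterGraph G W k (s : ℝ≥0∞)).connectedComponentMk ⟨y.1, hyo.trans hrs'⟩,
        ⟨⟨y.1, hyo.trans hrs'⟩, rfl, hyo⟩, ?_⟩
      exact SimpleGraph.ConnectedComponent.map_mk φ _
    have := Set.ncard_le_ncard hsub (Set.toFinite _)
    omega

lemma directionB (huv : u ≠ v) (hnotE : ¬ G.Adj u v) (r s : NNReal) (hrs : r ≤ s) :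
    persistentBetti G W k (r : ℝ≥0∞) (s : ℝ≥0∞) ≤
      persistentBetti (G ⊔ SimpleGraph.fromEdgeSet {s(u, v)})
        (Function.update W s(u, v) w₀) k (r : ℝ≥0∞) (s : ℝ≥0∞) + 1 := by
  set G' := G ⊔ SimpleGraph.fromEdgeSet {s(u, v)} with hG'def
  set W' := Function.update W s(u, v) w₀ with hW'def
  set φ := φAdd G W u v w₀ k (s : ℝ≥0∞) huv hnotE with hφdef
  set f := SimpleGraph.ConnectedComponent.map φ with hfdef
  set S : Set (kClusterGraph G W k (s : ℝ≥0∞)).ConnectedComponent :=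
    {c | ∃ x : {z : V // tauV G W k z ≤ (s : ℝ≥0∞)},
      (kClusterGraph G W k (s : ℝ≥0∞)).connectedComponentMk x = c ∧
        tauV G W k x.1 ≤ (r : ℝ≥0∞)} with hSdef
  set S' : Set (kClusterGraph G' W' k (s : ℝ≥0∞)).ConnectedComponent :=
    {c | ∃ x : {z : V // tauV G' W' k z ≤ (s : ℝ≥0∞)},
      (kClusterGraph G' W' k (s : ℝ≥0∞)).connectedComponentMk x = c ∧
        tauV G' W' k x.1 ≤ (r : ℝ≥0∞)} with hS'def
  show S.ncard ≤ S'.ncard + 1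
  have hfS : ∀ c ∈ S, f c ∈ S' := by
    rintro c ⟨x, rfl, hxr⟩
    exact ⟨φ x, (SimpleGraph.ConnectedComponent.map_mk φ x).symm,
      (tauV_add_le huv hnotE x.1).trans hxr⟩
  have himg : (f '' S).ncard ≤ S'.ncard := by
    apply Set.ncard_le_ncard _ (Set.toFinite _)
    rintro c' ⟨c, hc, rfl⟩
    exact hfS c hc
  by_cases hcol : ∃ c₁ ∈ S, ∃ c₂ ∈ S, f c₁ = f c₂ ∧ c₁ ≠ c₂
  · obtain ⟨c₁, hc₁, c₂, hc₂, hfeq, hne⟩ := hcol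
    obtain ⟨a, rfl⟩ := c₁.exists_rep
    obtain ⟨b, rfl⟩ := c₂.exists_rep
    have hnab : ¬ (kClusterGraph G W k (s : ℝ≥0∞)).Reachable a b := fun hr =>
      hne (SimpleGraph.ConnectedComponent.sound hr)
    have hab' : (kClusterGraph G' W' k (s : ℝ≥0∞)).Reachable (φ a) (φ b) := by
      rw [hfdef] at hfeq
      exact SimpleGraph.ConnectedComponent.exact hfeq
    obtain ⟨pa, pb⟩ := merge_structure huv hnotE ENNReal.coe_ne_top hab' hnab
    -- extract the two cluster values: the sides must be crossed
    have hboth : ∃ (hu0 : tauV G W k u ≤ (s : ℝ≥0∞)) (hv0 : tauV G W k v ≤ (s : ℝ≥0∞)),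
        True := by
      rcases pa with ⟨hu0, hau⟩ | ⟨hv0, hav⟩ <;>
        rcases pb with ⟨hu1, hbu⟩ | ⟨hv1, hbv⟩
      · exact absurd (hau.trans hbu.symm) hnab
      · exact ⟨hu0, hv1, trivial⟩
      · exact ⟨hu1, hv0, trivial⟩
      · exact absurd (hav.trans hbv.symm) hnab
    obtain ⟨hu0, hv0, -⟩ := hboth
    have hkey : ∀ d₁ ∈ S, ∀ d₂ ∈ S, f d₁ = f d₂ → d₁ ≠ d₂ →
        (d₁ = (kClusterGraph G W k (s : ℝ≥0∞)).connectedComponentMk ⟨u, hu0⟩ ∧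
         d₂ = (kClusterGraph G W k (s : ℝ≥0∞)).connectedComponentMk ⟨v, hv0⟩) ∨
        (d₁ = (kClusterGraph G W k (s : ℝ≥0∞)).connectedComponentMk ⟨v, hv0⟩ ∧
         d₂ = (kClusterGraph G W k (s : ℝ≥0∞)).connectedComponentMk ⟨u, hu0⟩) := by
      intro d₁ hd₁ d₂ hd₂ hfeq2 hne2
      obtain ⟨a', rfl⟩ := d₁.exists_rep
      obtain ⟨b', rfl⟩ := d₂.exists_rep
      have hnab2 : ¬ (kClusterGraph G W k (s : ℝ≥0∞)).Reachable a' b' := fun hr =>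
        hne2 (SimpleGraph.ConnectedComponent.sound hr)
      have hab2 : (kClusterGraph G' W' k (s : ℝ≥0∞)).Reachable (φ a') (φ b') := by
        rw [hfdef] at hfeq2
        exact SimpleGraph.ConnectedComponent.exact hfeq2
      obtain ⟨pa2, pb2⟩ := merge_structure huv hnotE ENNReal.coe_ne_top hab2 hnab2
      rcases pa2 with ⟨hu2, hau2⟩ | ⟨hv2, hav2⟩ <;>
        rcases pb2 with ⟨hu3, hbu3⟩ | ⟨hv3, hbv3⟩
      · exact absurd (hau2.trans hbu3.symm) hnab2
      · exact Or.inl ⟨SimpleGraph.ConnectedComponent.sound hau2,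
          SimpleGraph.ConnectedComponent.sound hbv3⟩
      · exact Or.inr ⟨SimpleGraph.ConnectedComponent.sound hav2,
          SimpleGraph.ConnectedComponent.sound hbu3⟩
      · exact absurd (hav2.trans hbv3.symm) hnab2
    have := count_aux f S _ _ hkey
    omega
  · push_neg at hcol
    have hinj : Set.InjOn f S := fun d₁ hd₁ d₂ hd₂ he => hcol d₁ hd₁ d₂ hd₂ he
    rw [← Set.ncard_image_of_injOn hinj] at *
    omega

end AuxMain

/-- For `k ≥ 1` and `0 ≤ r ≤ s`: adding a single weighted edge
`e₀ = (u,v) ∉ E` of weight `w₀` to `G` changes the 0-th persistent Betti number of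
the `k`-cluster filtration by at most one. -/
theorem persistentBetti_add_edge [Fintype V] [DecidableEq V]
    (G : SimpleGraph V) (W : Sym2 V → NNReal) (k : ℕ) (hk : 1 ≤ k)
    (r s : NNReal) (hrs : r ≤ s)
    (u v : V) (huv : u ≠ v) (hnotE : ¬ G.Adj u v) (w₀ : NNReal) :
    |(persistentBetti (G ⊔ SimpleGraph.fromEdgeSet {s(u, v)})
        (Function.update W s(u, v) w₀) k (r : ℝ≥0∞) (s : ℝ≥0∞) : ℤ) -
      (persistentBetti G W k (r : ℝ≥0∞) (s : ℝ≥0∞) : ℤ)| ≤ 1 := by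
  have hA := directionA (W := W) (w₀ := w₀) (k := k) huv hnotE r s hrs
  have hB := directionB (W := W) (w₀ := w₀) (k := k) huv hnotE r s hrs
  rw [abs_sub_le_iff]
  constructor <;> omega
end

section
/- Fix an integer k ≥ 1. Let G = (V, E, W) be a finite weighted graph, let e₀ = (u, v) ∉ E with weight w₀ ≥ 0, and let G̃ = (V, E ∪ {e₀}, W̃) with W̃ = W on E and W̃(e₀) = w₀. If u and v lie in the same connected component of the sublevel graph G*_{w₀}, then the k-cluster filtration values are unchanged: τ̃_k(x) = τ_k(x) for every vertex x ∈ V, where τ̃_k is computed in G̃ and τ_k in G. -/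
open ENNReal

variable {V : Type*}

lemma sublevel_mono_t (G : SimpleGraph V) (W : Sym2 V → NNReal) {s t : ℝ≥0∞} (h : s ≤ t) :
    sublevel G W s ≤ sublevel G W t := fun _ _ ha => ⟨ha.1, ha.2.trans h⟩

/-- For `k ≥ 1`: if the added edge `e₀ = (u,v) ∉ E` with weight `w₀`
joins two vertices already in the same connected component of the sublevel graph
`G*_{w₀}`, then all `k`-cluster filtration values are unchanged: `τ̃_k(x) = τ_k(x)`
for every vertex `x`. -/
theorem tauV_add_edge_same_component [Fintype V] [DecidableEq V]
    (G : SimpleGraph V) (W : Sym2 V → NNReal) (k : ℕ) (hk : 1 ≤ k)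
    (u v : V) (huv : u ≠ v) (hnotE : ¬ G.Adj u v) (w₀ : NNReal)
    (hreach : (sublevel G W (w₀ : ℝ≥0∞)).Reachable u v) :
    ∀ x : V,
      tauV (G ⊔ SimpleGraph.fromEdgeSet {s(u, v)}) (Function.update W s(u, v) w₀) k x =
        tauV G W k x := by
  set G' := G ⊔ SimpleGraph.fromEdgeSet {s(u, v)} with hG'
  set W' := Function.update W s(u, v) w₀ with hW'
  -- weights of old edges unchanged
  have hWeq : ∀ a b : V, G.Adj a b → W' s(a, b) = W s(a, b) := by
    intro a b hab
    apply Function.update_of_ne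
    intro h
    rw [Sym2.eq_iff] at h
    rcases h with ⟨rfl, rfl⟩ | ⟨rfl, rfl⟩
    · exact hnotE hab
    · exact hnotE hab.symm
  have key : ∀ (t : ℝ≥0∞) (a b : V),
      (sublevel G' W' t).Reachable a b ↔ (sublevel G W t).Reachable a b := by
    intro t a b
    constructor
    · intro h
      obtain ⟨p⟩ := h
      induction p with
      | nil => exact SimpleGraph.Reachable.refl _
      | cons h p ih =>
        refine SimpleGraph.Reachable.trans ?_ ih
        obtain ⟨hadj, hle⟩ := h
        rcases hadj with hG | hnew
        · exact SimpleGraph.Adj.reachable ⟨hG, by rwa [hWeq _ _ hG] at hle⟩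
        · have hmem : s(_, _) ∈ ({s(u, v)} : Set (Sym2 V)) := hnew.1
          rw [Set.mem_singleton_iff, Sym2.eq_iff] at hmem
          have hw : (W' s(u, v) : ℝ≥0∞) ≤ t := by
            rcases hmem with ⟨rfl, rfl⟩ | ⟨rfl, rfl⟩
            · exact hle
            · rwa [Sym2.eq_swap] at hle
          rw [hW', Function.update_self] at hw
          have hr : (sublevel G W t).Reachable u v :=
            hreach.mono (sublevel_mono_t G W hw)
          rcases hmem with ⟨rfl, rfl⟩ | ⟨rfl, rfl⟩
          · exact hr
          · exact hr.symm
    · intro h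
      refine h.mono ?_
      intro a b hab
      exact ⟨Or.inl hab.1, by rw [hWeq _ _ hab.1]; exact hab.2⟩
  intro x
  have hset : ∀ t : ℝ≥0∞, {y | (sublevel G' W' t).Reachable x y}
      = {y | (sublevel G W t).Reachable x y} := fun t => Set.ext fun y => key t x y
  simp only [tauV, clusterSize, hset]
end
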